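/- For all integers b ≥ 0 and N ≥ 2, it holds that 2^b · B(2^b, 1 + 1/(N − 1)) ≤ 2^{−b/(N − 1)}, where B(p, q) = Γ(p)Γ(q)/Γ(p+q) is the Euler Beta function. -/

import Mathlib

/-- Euler Beta function `B(p, q) = Γ(p)Γ(q)/Γ(p+q)`. -/
noncomputable def eulerBeta (p q : ℝ) : ℝ :=
  Real.Gamma p * Real.Gamma q / Real.Gamma (p + q)

lemma gamma_shift (s : ℝ) (hs : 0 < s) (M : ℕ) :
    Real.Gamma ((M : ℝ) + 1 + s) =
      (∏ k ∈ Finset.range M, ((k : ℝ) + 1 + s)) * Real.Gamma (1 + s) := by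
  induction M with
  | zero => simp
  | succ n ih =>
    have h1 : ((n + 1 : ℕ) : ℝ) + 1 + s = ((n : ℝ) + 1 + s) + 1 := by push_cast; ring
    have hne : ((n : ℝ) + 1 + s) ≠ 0 := by positivity
    rw [h1, Real.Gamma_add_one hne, ih, Finset.prod_range_succ]
    ring

lemma telescope (M : ℕ) :
    (∏ k ∈ Finset.range M, (((k : ℝ) + 1) / ((k : ℝ) + 2))) = 1 / ((M : ℝ) + 1) := by
  induction M with
  | zero => simp
  | succ n ih =>
    rw [Finset.prod_range_succ, ih]
    have h1 : ((n : ℝ) + 1) ≠ 0 := by positivity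
    have h2 : ((n : ℝ) + 2) ≠ 0 := by positivity
    push_cast
    field_simp
    ring

lemma prod_range_cast_factorial (M : ℕ) :
    (∏ k ∈ Finset.range M, ((k : ℝ) + 1)) = (M.factorial : ℝ) := by
  induction M with
  | zero => simp
  | succ n ih =>
    rw [Finset.prod_range_succ, ih, Nat.factorial_succ]
    push_cast
    ring

/-- RVQ quantization-error bound: for integers `b ≥ 0` and `N ≥ 2`,
`2^b · B(2^b, 1 + 1/(N−1)) ≤ 2^{−b/(N−1)}`. -/
theorem stmt_7 (b N : ℕ) (hN : 2 ≤ N) :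
    (2 : ℝ) ^ b * eulerBeta ((2 : ℝ) ^ b) (1 + 1 / ((N : ℝ) - 1)) ≤
      (2 : ℝ) ^ (-(b : ℝ) / ((N : ℝ) - 1)) := by
  set s : ℝ := 1 / ((N : ℝ) - 1) with hs_def
  have hN1 : (1 : ℝ) ≤ (N : ℝ) - 1 := by
    have : (2 : ℝ) ≤ (N : ℝ) := by exact_mod_cast hN
    linarith
  have hs_pos : 0 < s := by rw [hs_def]; positivity
  have hs_le : s ≤ 1 := by
    rw [hs_def, div_le_one (by linarith)]; linarith
  set M : ℕ := 2 ^ b with hM_def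
  have hM1 : 1 ≤ M := Nat.one_le_two_pow
  have hMR : ((2 : ℝ) ^ b) = (M : ℝ) := by rw [hM_def]; push_cast; ring
  clear_value M s
  have hMpos : (0 : ℝ) < (M : ℝ) := by exact_mod_cast hM1
  -- Step 1: LHS equals a product
  have hGpos : 0 < Real.Gamma (1 + s) := Real.Gamma_pos_of_pos (by linarith)
  have hProdPos : 0 < ∏ k ∈ Finset.range M, ((k : ℝ) + 1 + s) := by
    apply Finset.prod_pos; intro k _; positivity
  have key : (2 : ℝ) ^ b * eulerBeta ((2 : ℝ) ^ b) (1 + s) =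
      ∏ k ∈ Finset.range M, (((k : ℝ) + 1) / ((k : ℝ) + 1 + s)) := by
    have hadd : (M : ℝ) + (1 + s) = (M : ℝ) + 1 + s := by ring
    have hMne : ((M : ℝ)) ≠ 0 := ne_of_gt hMpos
    have hG1 : (M : ℝ) * Real.Gamma (M : ℝ) = Real.Gamma ((M : ℝ) + 1) := by
      rw [Real.Gamma_add_one hMne]
    have hG2 : Real.Gamma ((M : ℝ) + 1) = (M.factorial : ℝ) :=
      Real.Gamma_nat_eq_factorial M
    rw [eulerBeta, hMR, hadd, gamma_shift s hs_pos M]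
    rw [Finset.prod_div_distrib, prod_range_cast_factorial]
    field_simp
    rw [← hG2, ← hG1]
  rw [key]
  -- Step 2: bound each factor
  have step2 : (∏ k ∈ Finset.range M, (((k : ℝ) + 1) / ((k : ℝ) + 1 + s))) ≤
      ∏ k ∈ Finset.range M, ((((k : ℝ) + 1) / ((k : ℝ) + 2)) ^ s) := by
    apply Finset.prod_le_prod
    · intro k _; positivity
    · intro k _
      set a : ℝ := (k : ℝ) + 1 with ha_def
      have ha : (0 : ℝ) < a := by rw [ha_def]; positivity
      have hbern : ((a + 1) / a) ^ s ≤ (a + s) / a := by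
        have h1 : (a + 1) / a = 1 + 1 / a := by field_simp
        have h2 : (a + s) / a = 1 + s * (1 / a) := by field_simp
        rw [h1, h2]
        exact rpow_one_add_le_one_add_mul_self (le_trans (by norm_num) (le_of_lt (by positivity : (0:ℝ) < 1 / a))) hs_pos.le hs_le
      have hpos1 : (0 : ℝ) < ((a + 1) / a) ^ s := by positivity
      have heq : (a / (a + 1)) ^ s = (((a + 1) / a) ^ s)⁻¹ := by
        rw [← Real.inv_rpow (by positivity)]
        congr 1
        field_simp
      have h3 : a / (a + s) ≤ (a / (a + 1)) ^ s := by
        rw [heq, ← inv_div (a + s) a]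
        exact inv_anti₀ hpos1 hbern
      have h4 : ((k : ℝ) + 1) / ((k : ℝ) + 1 + s) = a / (a + s) := by rw [ha_def]
      have h5 : ((k : ℝ) + 1) / ((k : ℝ) + 2) = a / (a + 1) := by rw [ha_def]; ring_nf
      rw [h4, h5]
      exact h3
  refine le_trans step2 ?_
  -- Step 3: telescope
  have hnn : ∀ k ∈ Finset.range M, (0 : ℝ) ≤ ((k : ℝ) + 1) / ((k : ℝ) + 2) := by
    intro k _; positivity
  rw [Real.finset_prod_rpow _ _ hnn s, telescope M]
  -- Step 4: (1/(M+1))^s ≤ M^(-s) = RHS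
  have hfin : (1 / ((M : ℝ) + 1)) ^ s ≤ (2 : ℝ) ^ (-(b : ℝ) / ((N : ℝ) - 1)) := by
    have hrhs : (2 : ℝ) ^ (-(b : ℝ) / ((N : ℝ) - 1)) = ((M : ℝ)) ^ (-s) := by
      rw [← hMR]
      rw [← Real.rpow_natCast (2 : ℝ) b, ← Real.rpow_mul (by norm_num)]
      congr 1
      rw [hs_def]
      field_simp
    rw [hrhs, Real.rpow_neg hMpos.le, ← Real.inv_rpow hMpos.le, one_div]
    apply Real.rpow_le_rpow (by positivity) _ hs_pos.le
    exact inv_anti₀ hMpos (by linarith)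
  exact hfin
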